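/- Let N be a finite set with |N| ≥ 2 and let B be a balanced set system on N. Then B is minimal within the class of balanced systems on N if and only if B is minimal within the class of semi-balanced systems on N. -/

import Mathlib

open Finset

variable {α : Type*} [Fintype α] [DecidableEq α]

/-- Incidence (0/1 indicator) vector of a subset `S` of the player set. -/
def chi (S : Finset α) : α → ℝ := fun i => if i ∈ S then 1 else 0

/-- A non-trivial set system on `N`: nonempty, not containing `∅` nor `N`. -/
def IsNontrivial (𝒮 : Finset (Finset α)) : Prop :=
  𝒮.Nonempty ∧ ∅ ∉ 𝒮 ∧ (Finset.univ : Finset α) ∉ 𝒮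

/-- A combination is semi-conic if at most one coefficient is strictly negative. -/
def SemiConic (𝒮 : Finset (Finset α)) (lam : Finset α → ℝ) : Prop :=
  (𝒮.filter fun S => lam S < 0).card ≤ 1

/-- The combination `∑_{S ∈ 𝒮} lam S • χ_S` yields the constant vector `[r,…,r]`. -/
def CombYields (𝒮 : Finset (Finset α)) (lam : Finset α → ℝ) (r : ℝ) : Prop :=
  ∀ i : α, ∑ S ∈ 𝒮, lam S * chi S i = r

/-- A semi-balanced set system on `N`. -/
def IsSemiBalanced (𝒮 : Finset (Finset α)) : Prop :=
  IsNontrivial 𝒮 ∧ ∃ (lam : Finset α → ℝ) (r : ℝ),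
    CombYields 𝒮 lam r ∧ SemiConic 𝒮 lam ∧ ∀ S ∈ 𝒮, lam S ≠ 0

/-- A minimal semi-balanced set system on `N`. -/
def IsMinSemiBalanced (𝒮 : Finset (Finset α)) : Prop :=
  IsSemiBalanced 𝒮 ∧ ∀ 𝒞 ⊂ 𝒮, ¬ IsSemiBalanced 𝒞

/-- A balanced set system on `N`. -/
def IsBalanced (ℬ : Finset (Finset α)) : Prop :=
  IsNontrivial ℬ ∧ ∃ lam : Finset α → ℝ,
    (∀ S ∈ ℬ, 0 < lam S) ∧ ∀ i : α, ∑ S ∈ ℬ, lam S * chi S i = 1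

/-- A minimal balanced set system on `N`. -/
def IsMinBalanced (ℬ : Finset (Finset α)) : Prop :=
  IsBalanced ℬ ∧ ∀ 𝒞 ⊂ ℬ, ¬ IsBalanced 𝒞

/-- A set `T ∈ 𝒮` is exceptional within `𝒮`. -/
def IsExceptional (𝒮 : Finset (Finset α)) (T : Finset α) : Prop :=
  T ∈ 𝒮 ∧ ∃ (lam : Finset α → ℝ) (r : ℝ),
    CombYields 𝒮 lam r ∧ lam T < 0 ∧ ∀ S ∈ 𝒮, S ≠ T → 0 ≤ lam S

lemma sum_chi_subset {ℬ 𝒞 : Finset (Finset α)} (h : 𝒞 ⊆ ℬ) (f : Finset α → ℝ)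
    (hf : ∀ S ∈ ℬ, S ∉ 𝒞 → f S = 0) (i : α) :
    ∑ S ∈ 𝒞, f S * chi S i = ∑ S ∈ ℬ, f S * chi S i := by
  apply Finset.sum_subset h
  intro S hS hS'
  rw [hf S hS hS', zero_mul]

lemma key (h2 : 2 ≤ Fintype.card α) (ℬ : Finset (Finset α)) (hb : IsBalanced ℬ)
    (hmin : ∀ 𝒞 ⊂ ℬ, ¬ IsBalanced 𝒞) (c : Finset α → ℝ)
    (hc : ∀ i : α, ∑ S ∈ ℬ, c S * chi S i = 0)
    (hpos : ∃ S ∈ ℬ, 0 < c S) : False := by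
  classical
  obtain ⟨hnt, μ, hμpos, hμsum⟩ := hb
  obtain ⟨S₁, hS₁, hcS₁⟩ := hpos
  set P := ℬ.filter (fun S => 0 < c S) with hP
  have hPne : P.Nonempty := ⟨S₁, by simp [hP, hS₁, hcS₁]⟩
  obtain ⟨S₀, hS₀P, hS₀min⟩ := Finset.exists_min_image P (fun S => μ S / c S) hPne
  have hS₀ℬ : S₀ ∈ ℬ := (Finset.mem_filter.mp hS₀P).1
  have hcS₀ : 0 < c S₀ := (Finset.mem_filter.mp hS₀P).2
  set t := μ S₀ / c S₀ with ht
  have ht0 : 0 < t := div_pos (hμpos _ hS₀ℬ) hcS₀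
  set μ' : Finset α → ℝ := fun S => μ S - t * c S with hμ'
  have hμ'nonneg : ∀ S ∈ ℬ, 0 ≤ μ' S := by
    intro S hS
    rcases le_or_gt (c S) 0 with h | h
    · have := hμpos S hS; simp only [hμ']; nlinarith
    · have hSP : S ∈ P := Finset.mem_filter.mpr ⟨hS, h⟩
      have := hS₀min S hSP
      have : t * c S ≤ μ S := by
        rw [← le_div_iff₀ h]; exact this
      simp only [hμ']; linarith
  have hμ'S₀ : μ' S₀ = 0 := by
    simp only [hμ', ht]
    field_simp
    simp
  have hsum : ∀ i, ∑ S ∈ ℬ, μ' S * chi S i = 1 := by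
    intro i
    have : ∑ S ∈ ℬ, μ' S * chi S i
        = ∑ S ∈ ℬ, (μ S * chi S i - t * (c S * chi S i)) := by
      apply Finset.sum_congr rfl; intro S _; simp only [hμ']; ring
    rw [this, Finset.sum_sub_distrib, ← Finset.mul_sum, hc i, hμsum i]
    ring
  set 𝒞 := ℬ.filter (fun S => μ' S ≠ 0) with h𝒞
  have h𝒞sub : 𝒞 ⊆ ℬ := Finset.filter_subset _ _
  have h𝒞ssub : 𝒞 ⊂ ℬ := by
    refine ⟨h𝒞sub, fun hcon => ?_⟩
    have : S₀ ∈ 𝒞 := hcon hS₀ℬ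
    rw [h𝒞, Finset.mem_filter] at this
    exact this.2 hμ'S₀
  have hsum𝒞 : ∀ i, ∑ S ∈ 𝒞, μ' S * chi S i = 1 := by
    intro i
    rw [sum_chi_subset h𝒞sub μ' (fun S hS hS' => by
      by_contra h; exact hS' (Finset.mem_filter.mpr ⟨hS, h⟩))]
    exact hsum i
  have hα : Nonempty α := Fintype.card_pos_iff.mp (by omega)
  obtain ⟨i⟩ := hα
  have h𝒞ne : 𝒞.Nonempty := by
    by_contra h
    rw [Finset.not_nonempty_iff_eq_empty] at h
    have := hsum𝒞 i
    rw [h] at this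
    simp at this
  apply hmin 𝒞 h𝒞ssub
  refine ⟨⟨h𝒞ne, fun h => hnt.2.1 (h𝒞sub h), fun h => hnt.2.2 (h𝒞sub h)⟩, μ', ?_, hsum𝒞⟩
  intro S hS
  rw [h𝒞, Finset.mem_filter] at hS
  exact lt_of_le_of_ne (hμ'nonneg S hS.1) (Ne.symm hS.2)

lemma linindep (h2 : 2 ≤ Fintype.card α) (ℬ : Finset (Finset α)) (hb : IsBalanced ℬ)
    (hmin : ∀ 𝒞 ⊂ ℬ, ¬ IsBalanced 𝒞) (c : Finset α → ℝ)
    (hc : ∀ i : α, ∑ S ∈ ℬ, c S * chi S i = 0) : ∀ S ∈ ℬ, c S = 0 := by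
  intro S hS
  by_contra h0
  rcases lt_or_gt_of_ne h0 with h | h
  · refine key h2 ℬ hb hmin (fun T => -c T) (fun i => ?_) ⟨S, hS, neg_pos.mpr h⟩
    simp only [neg_mul]
    rw [Finset.sum_neg_distrib, hc i, neg_zero]
  · exact key h2 ℬ hb hmin c hc ⟨S, hS, h⟩

theorem stmt6 (h2 : 2 ≤ Fintype.card α) (ℬ : Finset (Finset α))
    (hb : IsBalanced ℬ) :
    (∀ 𝒞 ⊂ ℬ, ¬ IsBalanced 𝒞) ↔ (∀ 𝒞 ⊂ ℬ, ¬ IsSemiBalanced 𝒞) := by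
  classical
  constructor
  · intro hmin 𝒞 hsub hsb
    obtain ⟨⟨h𝒞ne, _, _⟩, lam, r, hyield, _, hlamne⟩ := hsb
    obtain ⟨hnt, μ, hμpos, hμsum⟩ := hb
    set c : Finset α → ℝ := fun S => r * μ S - (if S ∈ 𝒞 then lam S else 0) with hcdef
    have hc : ∀ i : α, ∑ S ∈ ℬ, c S * chi S i = 0 := by
      intro i
      have hsplit : ∑ S ∈ ℬ, c S * chi S i
          = ∑ S ∈ ℬ, (r * (μ S * chi S i)
              - (if S ∈ 𝒞 then lam S else 0) * chi S i) := by
        apply Finset.sum_congr rfl; intro S _; simp only [hcdef]; ring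
      rw [hsplit, Finset.sum_sub_distrib, ← Finset.mul_sum, hμsum i]
      have : ∑ S ∈ ℬ, (if S ∈ 𝒞 then lam S else 0) * chi S i
          = ∑ S ∈ 𝒞, lam S * chi S i := by
        rw [← sum_chi_subset hsub.subset (fun S => if S ∈ 𝒞 then lam S else 0)
          (fun S _ hS' => by simp [hS'])]
        apply Finset.sum_congr rfl
        intro S hS; simp [hS]
      rw [this, hyield i]
      ring
    have hall := linindep h2 ℬ ⟨hnt, μ, hμpos, hμsum⟩ hmin c hc
    obtain ⟨T, hTℬ, hT𝒞⟩ := Finset.exists_of_ssubset hsub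
    have hr : r = 0 := by
      have := hall T hTℬ
      simp only [hcdef, hT𝒞, if_neg, ite_false] at this
      have hμT := hμpos T hTℬ
      rcases mul_eq_zero.mp (by linarith : r * μ T = 0) with h | h
      · exact h
      · exact absurd h (ne_of_gt hμT)
    obtain ⟨S, hS𝒞⟩ := h𝒞ne
    have := hall S (hsub.subset hS𝒞)
    simp only [hcdef, hS𝒞, ite_true, hr, zero_mul, zero_sub, neg_eq_zero] at this
    exact hlamne S hS𝒞 this
  · intro hmin 𝒞 hsub hbal
    apply hmin 𝒞 hsub
    obtain ⟨hnt, lam, hpos, hsum⟩ := hbal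
    refine ⟨hnt, lam, 1, hsum, ?_, fun S hS => ne_of_gt (hpos S hS)⟩
    unfold SemiConic
    have : 𝒞.filter (fun S => lam S < 0) = ∅ := by
      apply Finset.filter_eq_empty_iff.mpr
      intro S hS
      exact not_lt.mpr (le_of_lt (hpos S hS))
    rw [this]
    simp
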